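/- Converse for neighboring interference (D antidote gaps on one side): consider K messages W_1, …, W_K (independent, uniform over alphabets of sizes giving rates R_i) encoded into S with H(S) ≤ n, such that for each i (indices mod K), W_i is a deterministic function of (S, W_{i+1}, …, W_{i+D})^c-complement side information; i.e., W_i is determined by S together with all messages except W_i, W_{i+1}, …, W_{i+D}. Then H(W_i) + H(W_{i+1}) + ⋯ + H(W_{i+D}) ≤ H(S) for every i. -/

import Mathlib

open Finset

/-- Probability that `X` takes the value `x`. -/
noncomputable def pr {Ω α : Type*} [Fintype Ω] [DecidableEq α]
    (p : Ω → ℝ) (X : Ω → α) (x : α) : ℝ :=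
  ∑ ω ∈ Finset.univ.filter (fun ω => X ω = x), p ω

/-- Shannon entropy. -/
noncomputable def H {Ω α : Type*} [Fintype Ω] [Fintype α] [DecidableEq α]
    (p : Ω → ℝ) (X : Ω → α) : ℝ :=
  ∑ x : α, Real.negMulLog (pr p X x)

/-- Conditional entropy `H(X | Y) = H(X, Y) − H(Y)`. -/
noncomputable def condH {Ω α β : Type*} [Fintype Ω] [Fintype α] [Fintype β]
    [DecidableEq α] [DecidableEq β] (p : Ω → ℝ) (X : Ω → α) (Y : Ω → β) : ℝ :=
  H p (fun ω => (X ω, Y ω)) - H p Y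

namespace NI

/- ### negMulLog helpers -/

lemma nml_add_le {a b : ℝ} (ha : 0 ≤ a) (hb : 0 ≤ b) :
    Real.negMulLog (a + b) ≤ Real.negMulLog a + Real.negMulLog b := by
  rcases ha.eq_or_lt with h | h
  · simp [← h]
  rcases hb.eq_or_lt with h' | h'
  · simp [← h']
  have l1 : Real.log a ≤ Real.log (a + b) := Real.log_le_log h (by linarith)
  have l2 : Real.log b ≤ Real.log (a + b) := Real.log_le_log h' (by linarith)
  simp only [Real.negMulLog]
  nlinarith

lemma nml_sum_le {ι : Type*} (s : Finset ι) (f : ι → ℝ) (hf : ∀ i ∈ s, 0 ≤ f i) :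
    Real.negMulLog (∑ i ∈ s, f i) ≤ ∑ i ∈ s, Real.negMulLog (f i) := by
  induction s using Finset.cons_induction with
  | empty => simp
  | cons a s ha ih =>
    rw [Finset.sum_cons, Finset.sum_cons]
    have h1 : 0 ≤ ∑ i ∈ s, f i :=
      Finset.sum_nonneg fun i hi => hf i (Finset.mem_cons_of_mem hi)
    calc Real.negMulLog (f a + ∑ i ∈ s, f i)
        ≤ Real.negMulLog (f a) + Real.negMulLog (∑ i ∈ s, f i) :=
          nml_add_le (hf a (Finset.mem_cons_self a s)) h1
      _ ≤ _ := add_le_add le_rfl (ih fun i hi => hf i (Finset.mem_cons_of_mem hi))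

lemma nml_sum_lt {ι : Type*} [DecidableEq ι] (s : Finset ι) (f : ι → ℝ)
    (hf : ∀ i ∈ s, 0 ≤ f i) {x₁ x₂ : ι} (h₁ : x₁ ∈ s) (h₂ : x₂ ∈ s) (hne : x₁ ≠ x₂)
    (hf1 : 0 < f x₁) (hf2 : 0 < f x₂) :
    Real.negMulLog (∑ i ∈ s, f i) < ∑ i ∈ s, Real.negMulLog (f i) := by
  rw [← Finset.add_sum_erase s f h₁,
      ← Finset.add_sum_erase s (fun i => Real.negMulLog (f i)) h₁]
  have hR2 : f x₂ ≤ ∑ i ∈ s.erase x₁, f i :=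
    Finset.single_le_sum (fun i hi => hf i (Finset.mem_of_mem_erase hi))
      (Finset.mem_erase.2 ⟨hne.symm, h₂⟩)
  have hRpos : 0 < ∑ i ∈ s.erase x₁, f i := lt_of_lt_of_le hf2 hR2
  have key : Real.negMulLog (f x₁ + ∑ i ∈ s.erase x₁, f i)
      < Real.negMulLog (f x₁) + Real.negMulLog (∑ i ∈ s.erase x₁, f i) := by
    have l1 : Real.log (f x₁) < Real.log (f x₁ + ∑ i ∈ s.erase x₁, f i) :=
      Real.log_lt_log hf1 (by linarith)
    have l2 : Real.log (∑ i ∈ s.erase x₁, f i)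
        ≤ Real.log (f x₁ + ∑ i ∈ s.erase x₁, f i) :=
      Real.log_le_log hRpos (by linarith)
    simp only [Real.negMulLog]
    nlinarith
  have key2 : Real.negMulLog (∑ i ∈ s.erase x₁, f i)
      ≤ ∑ i ∈ s.erase x₁, Real.negMulLog (f i) :=
    nml_sum_le _ _ fun i hi => hf i (Finset.mem_of_mem_erase hi)
  linarith

lemma nml_prod {ι : Type*} [DecidableEq ι] (s : Finset ι) (f : ι → ℝ) :
    Real.negMulLog (∏ i ∈ s, f i)
      = ∑ i ∈ s, (∏ k ∈ s.erase i, f k) * Real.negMulLog (f i) := by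
  induction s using Finset.induction_on with
  | empty => simp
  | insert a s ha ih =>
    have hterm : ∀ i ∈ s, (∏ k ∈ (insert a s).erase i, f k) * Real.negMulLog (f i)
        = f a * ((∏ k ∈ s.erase i, f k) * Real.negMulLog (f i)) := by
      intro i hi
      have hne : a ≠ i := by rintro rfl; exact ha hi
      rw [Finset.erase_insert_of_ne hne,
        Finset.prod_insert (fun h => ha (Finset.mem_of_mem_erase h))]
      ring
    rw [Finset.prod_insert ha, Real.negMulLog_mul, Finset.sum_insert ha,
        Finset.erase_insert ha, Finset.sum_congr rfl hterm, ← Finset.mul_sum, ih]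

/- ### pr helpers -/

variable {Ω : Type*} [Fintype Ω] {p : Ω → ℝ}

lemma pr_nonneg (hp : ∀ ω, 0 ≤ p ω) {α : Type*} [DecidableEq α] (X : Ω → α) (x : α) :
    0 ≤ pr p X x :=
  Finset.sum_nonneg fun ω _ => hp ω

lemma sum_pr {α : Type*} [Fintype α] [DecidableEq α] (X : Ω → α) :
    ∑ x, pr p X x = ∑ ω, p ω := by
  unfold pr; exact Finset.sum_fiberwise _ _ _

lemma pr_pos_elim {α : Type*} [DecidableEq α] (hp : ∀ ω, 0 ≤ p ω) {X : Ω → α} {x : α}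
    (h : pr p X x ≠ 0) : ∃ ω, 0 < p ω ∧ X ω = x := by
  obtain ⟨ω, hω, hne⟩ := Finset.exists_ne_zero_of_sum_ne_zero h
  exact ⟨ω, (hp ω).lt_of_ne (Ne.symm hne), (Finset.mem_filter.1 hω).2⟩

lemma le_pr (hp : ∀ ω, 0 ≤ p ω) {α : Type*} [DecidableEq α] (X : Ω → α) (ω : Ω) :
    p ω ≤ pr p X (X ω) :=
  Finset.single_le_sum (fun ω' _ => hp ω')
    (Finset.mem_filter.2 ⟨Finset.mem_univ ω, rfl⟩)

lemma pr_fst {α β : Type*} [DecidableEq α] [Fintype β] [DecidableEq β]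
    (X : Ω → α) (Y : Ω → β) (x : α) :
    pr p X x = ∑ y, pr p (fun ω => (X ω, Y ω)) (x, y) := by
  unfold pr
  rw [← Finset.sum_fiberwise (Finset.univ.filter fun ω => X ω = x) Y p]
  apply Finset.sum_congr rfl
  intro y _
  apply Finset.sum_congr _ fun _ _ => rfl
  ext ω
  simp [Prod.ext_iff, and_comm]

lemma pr_snd {α β : Type*} [Fintype α] [DecidableEq α] [DecidableEq β]
    (X : Ω → α) (Y : Ω → β) (y : β) :
    pr p Y y = ∑ x, pr p (fun ω => (X ω, Y ω)) (x, y) := by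
  unfold pr
  rw [← Finset.sum_fiberwise (Finset.univ.filter fun ω => Y ω = y) X p]
  apply Finset.sum_congr rfl
  intro x _
  apply Finset.sum_congr _ fun _ _ => rfl
  ext ω
  simp [Prod.ext_iff, and_comm]

/- ### entropy helpers -/

lemma H_relabel {α γ : Type*} [Fintype α] [Fintype γ] [DecidableEq α] [DecidableEq γ]
    {g : α → γ} (hg : Function.Injective g) (X : Ω → α) :
    H p (fun ω => g (X ω)) = H p X := by
  have h0 : ∀ z ∈ (Finset.univ : Finset γ), z ∉ Finset.univ.image g →
      Real.negMulLog (pr p (fun ω => g (X ω)) z) = 0 := by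
    intro z _ hz
    have he : pr p (fun ω => g (X ω)) z = 0 := by
      unfold pr
      rw [Finset.filter_false_of_mem, Finset.sum_empty]
      exact fun ω _ h => hz (Finset.mem_image.2 ⟨X ω, Finset.mem_univ _, h⟩)
    rw [he, Real.negMulLog_zero]
  unfold H
  rw [← Finset.sum_subset (Finset.subset_univ _) h0,
      Finset.sum_image (fun x _ y _ h => hg h)]
  apply Finset.sum_congr rfl
  intro x _
  congr 1
  unfold pr
  exact Finset.sum_congr (by ext ω; simp [hg.eq_iff]) fun _ _ => rfl

/-- `X` is (a.s.) determined by `Y`. -/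
def Det {Ω α β : Type*} (p : Ω → ℝ) (Y : Ω → β) (X : Ω → α) : Prop :=
  ∀ ω ω', 0 < p ω → 0 < p ω' → Y ω = Y ω' → X ω = X ω'

lemma fiber_unique {α β : Type*} [DecidableEq α] [DecidableEq β] (hp : ∀ ω, 0 ≤ p ω)
    {X : Ω → α} {Y : Ω → β} (h : Det p Y X) (y : β) {x x' : α}
    (hx : pr p (fun ω => (X ω, Y ω)) (x, y) ≠ 0)
    (hx' : pr p (fun ω => (X ω, Y ω)) (x', y) ≠ 0) : x = x' := by
  obtain ⟨ω, hω, he⟩ := pr_pos_elim hp hx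
  obtain ⟨ω', hω', he'⟩ := pr_pos_elim hp hx'
  have e1 : X ω = x := congrArg Prod.fst he
  have e2 : Y ω = y := congrArg Prod.snd he
  have e1' : X ω' = x' := congrArg Prod.fst he'
  have e2' : Y ω' = y := congrArg Prod.snd he'
  rw [← e1, ← e1']
  exact h ω ω' hω hω' (by rw [e2, e2'])

lemma H_pair_eq_of_det {α β : Type*} [Fintype α] [Fintype β] [DecidableEq α] [DecidableEq β]
    (hp : ∀ ω, 0 ≤ p ω) {X : Ω → α} {Y : Ω → β} (h : Det p Y X) :
    H p (fun ω => (X ω, Y ω)) = H p Y := by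
  unfold H
  rw [Fintype.sum_prod_type_right]
  apply Finset.sum_congr rfl
  intro y _
  by_cases hall : ∀ x, pr p (fun ω => (X ω, Y ω)) (x, y) = 0
  · have hy : pr p Y y = 0 := by
      rw [pr_snd X Y y]; exact Finset.sum_eq_zero fun x _ => hall x
    rw [hy, Real.negMulLog_zero]
    exact Finset.sum_eq_zero fun x _ => by rw [hall x, Real.negMulLog_zero]
  · push_neg at hall
    obtain ⟨x₀, hx₀⟩ := hall
    have hone : ∀ x, x ≠ x₀ → pr p (fun ω => (X ω, Y ω)) (x, y) = 0 := by
      intro x hx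
      by_contra hc
      exact hx (fiber_unique hp h y hc hx₀)
    rw [Finset.sum_eq_single x₀
      (fun x _ hx => by rw [hone x hx, Real.negMulLog_zero])
      (fun hmem => absurd (Finset.mem_univ _) hmem)]
    congr 1
    rw [pr_snd X Y y,
      Finset.sum_eq_single x₀ (fun x _ hx => hone x hx)
        (fun hmem => absurd (Finset.mem_univ _) hmem)]

lemma H_snd_le {α β : Type*} [Fintype α] [Fintype β] [DecidableEq α] [DecidableEq β]
    (hp : ∀ ω, 0 ≤ p ω) (X : Ω → α) (Y : Ω → β) :
    H p Y ≤ H p (fun ω => (X ω, Y ω)) := by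
  unfold H
  rw [Fintype.sum_prod_type_right]
  apply Finset.sum_le_sum
  intro y _
  rw [pr_snd X Y y]
  exact nml_sum_le _ _ fun x _ => pr_nonneg hp _ _

lemma H_swap {α β : Type*} [Fintype α] [Fintype β] [DecidableEq α] [DecidableEq β]
    (X : Ω → α) (Y : Ω → β) :
    H p (fun ω => (X ω, Y ω)) = H p (fun ω => (Y ω, X ω)) := by
  have := H_relabel (p := p) (g := Prod.swap (α := β) (β := α))
    Prod.swap_injective (fun ω => (Y ω, X ω))
  simpa using this

lemma H_mutual {α β : Type*} [Fintype α] [Fintype β] [DecidableEq α] [DecidableEq β]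
    (hp : ∀ ω, 0 ≤ p ω) {X : Ω → α} {Y : Ω → β}
    (f : β → α) (g : α → β) (hf : ∀ ω, X ω = f (Y ω)) (hg : ∀ ω, Y ω = g (X ω)) :
    H p X = H p Y := by
  have d1 : Det p Y X := fun ω ω' _ _ hY => by rw [hf, hf, hY]
  have d2 : Det p X Y := fun ω ω' _ _ hX => by rw [hg, hg, hX]
  have e1 := H_pair_eq_of_det hp d1
  have e2 := H_pair_eq_of_det hp d2
  rw [← e1, H_swap, e2]

lemma H_const {α : Type*} [Fintype α] [DecidableEq α] (hp1 : ∑ ω, p ω = 1) (c : α) :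
    H p (fun _ => c) = 0 := by
  unfold H
  apply Finset.sum_eq_zero
  intro x _
  by_cases hx : x = c
  · subst hx
    have : pr p (fun _ => x) x = 1 := by
      unfold pr
      rw [Finset.filter_true_of_mem fun _ _ => rfl]
      exact hp1
    rw [this, Real.negMulLog_one]
  · have : pr p (fun _ => c) x = 0 := by
      unfold pr
      rw [Finset.filter_false_of_mem fun _ _ h => hx h.symm, Finset.sum_empty]
    rw [this, Real.negMulLog_zero]

lemma gibbs {ι : Type*} (s : Finset ι) (r q : ι → ℝ) (hr : ∀ i ∈ s, 0 ≤ r i)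
    (hq : ∀ i ∈ s, 0 ≤ q i) (hrq : ∀ i ∈ s, r i ≠ 0 → q i ≠ 0)
    (hsum : ∑ i ∈ s, q i ≤ ∑ i ∈ s, r i) :
    ∑ i ∈ s, Real.negMulLog (r i) ≤ ∑ i ∈ s, r i * (-Real.log (q i)) := by
  have key : ∀ i ∈ s, Real.negMulLog (r i) - r i * (-Real.log (q i)) ≤ q i - r i := by
    intro i hi
    rcases (hr i hi).eq_or_lt with h | h
    · rw [← h]; simpa using hq i hi
    · have hqpos : 0 < q i := (hq i hi).lt_of_ne (Ne.symm (hrq i hi h.ne'))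
      have hlog : Real.log (q i / r i) ≤ q i / r i - 1 :=
        Real.log_le_sub_one_of_pos (div_pos hqpos h)
      rw [Real.log_div hqpos.ne' h.ne'] at hlog
      have hmul := mul_le_mul_of_nonneg_left hlog h.le
      have hrr : r i * (q i / r i - 1) = q i - r i := by field_simp
      simp only [Real.negMulLog]
      nlinarith
  have hs := Finset.sum_le_sum key
  rw [Finset.sum_sub_distrib, Finset.sum_sub_distrib] at hs
  linarith

lemma H_pair_le {α β : Type*} [Fintype α] [Fintype β] [DecidableEq α] [DecidableEq β]
    (hp : ∀ ω, 0 ≤ p ω) (hp1 : ∑ ω, p ω = 1) (X : Ω → α) (Y : Ω → β) :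
    H p (fun ω => (X ω, Y ω)) ≤ H p X + H p Y := by
  have hmar : ∀ z : α × β, pr p (fun ω => (X ω, Y ω)) z ≠ 0 →
      pr p X z.1 ≠ 0 ∧ pr p Y z.2 ≠ 0 := by
    intro z hz
    obtain ⟨ω, hω, he⟩ := pr_pos_elim hp hz
    have e1 : X ω = z.1 := congrArg Prod.fst he
    have e2 : Y ω = z.2 := congrArg Prod.snd he
    constructor
    · have := lt_of_lt_of_le hω (le_pr hp X ω); rw [e1] at this; exact this.ne'
    · have := lt_of_lt_of_le hω (le_pr hp Y ω); rw [e2] at this; exact this.ne'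
  have hgibbs := gibbs Finset.univ (fun z => pr p (fun ω => (X ω, Y ω)) z)
    (fun z => pr p X z.1 * pr p Y z.2)
    (fun z _ => pr_nonneg hp _ _)
    (fun z _ => mul_nonneg (pr_nonneg hp _ _) (pr_nonneg hp _ _))
    (fun z _ hz => mul_ne_zero (hmar z hz).1 (hmar z hz).2)
    (by
      have hq : ∑ z : α × β, pr p X z.1 * pr p Y z.2
          = (∑ a, pr p X a) * (∑ b, pr p Y b) := by
        rw [Finset.sum_mul_sum, Fintype.sum_prod_type]
      rw [hq, sum_pr, sum_pr, hp1, one_mul, sum_pr, hp1])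
  have hsplit : ∑ z : α × β, pr p (fun ω => (X ω, Y ω)) z
        * (-Real.log (pr p X z.1 * pr p Y z.2))
      = H p X + H p Y := by
    have hterm : ∀ z : α × β, pr p (fun ω => (X ω, Y ω)) z
          * (-Real.log (pr p X z.1 * pr p Y z.2))
        = pr p (fun ω => (X ω, Y ω)) z * (-Real.log (pr p X z.1))
          + pr p (fun ω => (X ω, Y ω)) z * (-Real.log (pr p Y z.2)) := by
      intro z
      by_cases hz : pr p (fun ω => (X ω, Y ω)) z = 0
      · rw [hz]; ring
      · rw [Real.log_mul (hmar z hz).1 (hmar z hz).2]; ring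
    rw [Finset.sum_congr rfl fun z _ => hterm z, Finset.sum_add_distrib]
    congr 1
    · rw [Fintype.sum_prod_type]
      unfold H
      apply Finset.sum_congr rfl
      intro a _
      show ∑ y : β, pr p (fun ω => (X ω, Y ω)) (a, y) * -Real.log (pr p X a)
          = Real.negMulLog (pr p X a)
      rw [← Finset.sum_mul, ← pr_fst X Y a]
      simp only [Real.negMulLog]; ring
    · rw [Fintype.sum_prod_type_right]
      unfold H
      apply Finset.sum_congr rfl
      intro b _
      show ∑ x : α, pr p (fun ω => (X ω, Y ω)) (x, b) * -Real.log (pr p Y b)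
          = Real.negMulLog (pr p Y b)
      rw [← Finset.sum_mul, ← pr_snd X Y b]
      simp only [Real.negMulLog]; ring
  calc H p (fun ω => (X ω, Y ω)) ≤ _ := hgibbs
    _ = H p X + H p Y := hsplit

lemma det_of_H_pair_eq {α β : Type*} [Fintype α] [Fintype β] [DecidableEq α] [DecidableEq β]
    (hp : ∀ ω, 0 ≤ p ω) {X : Ω → α} {Y : Ω → β}
    (h : H p (fun ω => (X ω, Y ω)) = H p Y) : Det p Y X := by
  have hle : ∀ y ∈ (Finset.univ : Finset β),
      Real.negMulLog (pr p Y y)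
        ≤ ∑ x, Real.negMulLog (pr p (fun ω => (X ω, Y ω)) (x, y)) := by
    intro y _
    rw [pr_snd X Y y]
    exact nml_sum_le _ _ fun x _ => pr_nonneg hp _ _
  have hsum : ∑ y, Real.negMulLog (pr p Y y)
      = ∑ y, ∑ x, Real.negMulLog (pr p (fun ω => (X ω, Y ω)) (x, y)) := by
    have h' := h
    unfold H at h'
    rw [Fintype.sum_prod_type_right] at h'
    exact h'.symm
  have heq := (Finset.sum_eq_sum_iff_of_le hle).1 hsum
  intro ω ω' hω hω' hY
  by_contra hne
  have hy := heq (Y ω) (Finset.mem_univ _)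
  have h1 : 0 < pr p (fun ω'' => (X ω'', Y ω'')) (X ω, Y ω) :=
    lt_of_lt_of_le hω (le_pr hp (fun ω'' => (X ω'', Y ω'')) ω)
  have h2 : 0 < pr p (fun ω'' => (X ω'', Y ω'')) (X ω', Y ω) := by
    have := lt_of_lt_of_le hω' (le_pr hp (fun ω'' => (X ω'', Y ω'')) ω')
    rwa [← hY] at this
  have hlt := nml_sum_lt (Finset.univ : Finset α)
    (fun x => pr p (fun ω'' => (X ω'', Y ω'')) (x, Y ω))
    (fun x _ => pr_nonneg hp _ _) (Finset.mem_univ (X ω)) (Finset.mem_univ (X ω'))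
    hne h1 h2
  rw [← pr_snd X Y (Y ω)] at hlt
  exact absurd hy (ne_of_lt hlt)

lemma H_indep {ι : Type*} [Fintype ι] [DecidableEq ι] {α : Type*} [Fintype α] [DecidableEq α]
    (hp1 : ∑ ω, p ω = 1) (W : ι → Ω → α)
    (hindep : ∀ x : ι → α, pr p (fun ω => fun j => W j ω) x = ∏ j, pr p (W j) (x j)) :
    H p (fun ω => fun j => W j ω) = ∑ j, H p (W j) := by
  unfold H
  calc ∑ x : ι → α, Real.negMulLog (pr p (fun ω => fun j => W j ω) x)
      = ∑ x : ι → α, ∑ j, (∏ k ∈ Finset.univ.erase j, pr p (W k) (x k))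
          * Real.negMulLog (pr p (W j) (x j)) := by
        apply Finset.sum_congr rfl
        intro x _
        rw [hindep x, nml_prod]
    _ = ∑ j, ∑ x : ι → α, (∏ k ∈ Finset.univ.erase j, pr p (W k) (x k))
          * Real.negMulLog (pr p (W j) (x j)) := Finset.sum_comm
    _ = ∑ j, ∑ a : α, Real.negMulLog (pr p (W j) a) := by
        apply Finset.sum_congr rfl
        intro j _
        set F : ι → α → ℝ := fun k a =>
          if k = j then Real.negMulLog (pr p (W j) a) else pr p (W k) a with hFdef
        have hF : ∀ x : ι → α,
            (∏ k ∈ Finset.univ.erase j, pr p (W k) (x k))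
              * Real.negMulLog (pr p (W j) (x j)) = ∏ k, F k (x k) := by
          intro x
          rw [← Finset.mul_prod_erase Finset.univ (fun k => F k (x k)) (Finset.mem_univ j)]
          have h1 : F j (x j) = Real.negMulLog (pr p (W j) (x j)) := if_pos rfl
          have h2 : ∏ k ∈ Finset.univ.erase j, F k (x k)
              = ∏ k ∈ Finset.univ.erase j, pr p (W k) (x k) :=
            Finset.prod_congr rfl fun k hk => if_neg (Finset.mem_erase.1 hk).1
          rw [h1, h2, mul_comm]
        rw [Finset.sum_congr rfl fun x _ => hF x]
        have hps := Finset.prod_univ_sum (fun _ : ι => (Finset.univ : Finset α))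
          (fun k a => F k a)
        rw [Fintype.piFinset_univ] at hps
        rw [← hps, ← Finset.mul_prod_erase Finset.univ
          (fun k => ∑ a : α, F k a) (Finset.mem_univ j)]
        have hj : ∑ a : α, F j a = ∑ a : α, Real.negMulLog (pr p (W j) a) :=
          Finset.sum_congr rfl fun a _ => if_pos rfl
        have hk : ∏ k ∈ Finset.univ.erase j, ∑ a : α, F k a = 1 := by
          apply Finset.prod_eq_one
          intro k hkk
          have he : ∑ a : α, F k a = ∑ a : α, pr p (W k) a :=
            Finset.sum_congr rfl fun a _ => if_neg (Finset.mem_erase.1 hkk).1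
          rw [he, sum_pr, hp1]
        rw [hj, hk, mul_one]

lemma H_masked_le {ι : Type*} [Fintype ι] [DecidableEq ι]
    {α : Type*} [Fintype α] [DecidableEq α] [Inhabited α]
    (hp : ∀ ω, 0 ≤ p ω) (hp1 : ∑ ω, p ω = 1) (W : ι → Ω → α) (s : Finset ι) :
    H p (fun ω (j : ι) => if j ∈ s then W j ω else default) ≤ ∑ j ∈ s, H p (W j) := by
  induction s using Finset.induction_on with
  | empty =>
    have he : (fun ω (j : ι) => if j ∈ (∅ : Finset ι) then W j ω else default)
        = fun _ => (fun _ => default : ι → α) := by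
      funext ω j; simp
    rw [he, H_const hp1, Finset.sum_empty]
  | insert a s ha ih =>
    have hmut : H p (fun ω (j : ι) => if j ∈ insert a s then W j ω else default)
        = H p (fun ω => (W a ω, fun j : ι => if j ∈ s then W j ω else default)) := by
      apply H_mutual hp
        (f := fun z : α × (ι → α) => fun j => if j = a then z.1 else z.2 j)
        (g := fun u : ι → α => (u a, fun j => if j ∈ s then u j else default))
      · intro ω
        funext j
        show (if j ∈ insert a s then W j ω else default)
            = if j = a then W a ω else if j ∈ s then W j ω else default
        by_cases hj : j = a
        · subst hj
          rw [if_pos (Finset.mem_insert_self _ _), if_pos rfl]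
        · rw [if_neg hj]
          by_cases hjs : j ∈ s
          · rw [if_pos (Finset.mem_insert_of_mem hjs), if_pos hjs]
          · rw [if_neg (fun hm => hjs ((Finset.mem_insert.1 hm).resolve_left hj)),
              if_neg hjs]
      · intro ω
        refine Prod.ext ?_ ?_
        · show W a ω = if a ∈ insert a s then W a ω else default
          rw [if_pos (Finset.mem_insert_self _ _)]
        · show (fun j : ι => if j ∈ s then W j ω else default)
              = fun j => if j ∈ s then (if j ∈ insert a s then W j ω else default)
                else default
          funext j
          by_cases hjs : j ∈ s
          · rw [if_pos hjs, if_pos hjs, if_pos (Finset.mem_insert_of_mem hjs)]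
          · rw [if_neg hjs, if_neg hjs]
    rw [hmut, Finset.sum_insert ha]
    calc H p (fun ω => (W a ω, fun j : ι => if j ∈ s then W j ω else default))
        ≤ H p (W a) + H p (fun ω (j : ι) => if j ∈ s then W j ω else default) :=
          H_pair_le hp hp1 _ _
      _ ≤ H p (W a) + ∑ j ∈ s, H p (W j) := add_le_add le_rfl ih

lemma zmod_cast_inj {K : ℕ} [NeZero K] {a b : ℕ} (ha : a < K) (hb : b < K)
    (h : (a : ZMod K) = b) : a = b := by
  have hv := congrArg ZMod.val h
  rwa [ZMod.val_cast_of_lt ha, ZMod.val_cast_of_lt hb] at hv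

end NI

/-- Converse for neighboring interference (Theorem 7 outer bound): if the `K`
mutually independent messages `W_i` (indices mod `K`) are encoded into `S` with
`H(S) ≤ n`, and each `W_i` is a zero-error function of `S` together with all
messages outside the window `{i, i+1, …, i+D}`, then
`H(W_i) + H(W_{i+1}) + ⋯ + H(W_{i+D}) ≤ H(S)` for every `i`. -/
theorem neighboring_interference_converse
    {Ω α β : Type*} [Fintype Ω] [Fintype α] [Fintype β]
    [DecidableEq α] [DecidableEq β] [Inhabited α]
    (K D n : ℕ) [NeZero K] (hDK : D < K)
    (p : Ω → ℝ) (hp : ∀ ω, 0 ≤ p ω) (hp1 : ∑ ω, p ω = 1)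
    (W : ZMod K → Ω → α) (S : Ω → β)
    (hindep : ∀ x : ZMod K → α,
      pr p (fun ω => fun j => W j ω) x = ∏ j, pr p (W j) (x j))
    (hS : H p S ≤ (n : ℝ))
    (hdec : ∀ i : ZMod K,
      condH p (W i)
        (fun ω => (S ω, fun j : ZMod K =>
          if ∀ d : Fin (D + 1), j ≠ i + ((d : ℕ) : ZMod K) then W j ω else default)) = 0) :
    ∀ i : ZMod K,
      ∑ d ∈ Finset.range (D + 1), H p (W (i + (d : ZMod K))) ≤ H p S := by
  intro i
  classical
  set C : ℕ → ZMod K → Prop :=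
    fun k j => ∀ d : Fin (D + 1), k ≤ (d : ℕ) → j ≠ i + ((d : ℕ) : ZMod K) with hC
  set U : ℕ → Ω → ZMod K → α :=
    fun k ω j => if C k j then W j ω else default with hU
  -- decoding step
  have hstep : ∀ k, k ≤ D →
      H p (fun ω => (S ω, U (k + 1) ω)) = H p (fun ω => (S ω, U k ω)) := by
    intro k hk
    set i' : ZMod K := i + (k : ZMod K) with hi'
    have hdk := hdec i'
    unfold condH at hdk
    have hdet0 : NI.Det p (fun ω => (S ω, fun j : ZMod K =>
        if ∀ d : Fin (D + 1), j ≠ i' + ((d : ℕ) : ZMod K) then W j ω else default))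
        (W i') :=
      NI.det_of_H_pair_eq hp (sub_eq_zero.mp hdk)
    have hdet : NI.Det p (fun ω => (S ω, U k ω)) (W i') := by
      intro ω ω' hω hω' heq
      apply hdet0 ω ω' hω hω'
      have hSe : S ω = S ω' := congrArg Prod.fst heq
      have hUe : U k ω = U k ω' := congrArg Prod.snd heq
      refine Prod.ext hSe ?_
      show (fun j : ZMod K =>
          if ∀ d : Fin (D + 1), j ≠ i' + ((d : ℕ) : ZMod K) then W j ω else default)
        = fun j : ZMod K =>
          if ∀ d : Fin (D + 1), j ≠ i' + ((d : ℕ) : ZMod K) then W j ω' else default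
      funext j
      beta_reduce
      by_cases hc : ∀ d : Fin (D + 1), j ≠ i' + ((d : ℕ) : ZMod K)
      · rw [if_pos hc, if_pos hc]
        have hCk : C k j := by
          intro d hd
          have hd' : (d : ℕ) - k < D + 1 := by omega
          have hthis := hc ⟨(d : ℕ) - k, hd'⟩
          have e : i + ((d : ℕ) : ZMod K) = i' + (((d : ℕ) - k : ℕ) : ZMod K) := by
            rw [hi', Nat.cast_sub hd]; ring
          exact fun hj => hthis (hj.trans e)
        have hval := congrFun hUe j
        simp only [hU] at hval
        rw [if_pos hCk, if_pos hCk] at hval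
        exact hval
      · rw [if_neg hc, if_neg hc]
    have hCi' : C (k + 1) i' := by
      intro d hd hje
      rw [hi'] at hje
      have hcast : (k : ZMod K) = ((d : ℕ) : ZMod K) := add_left_cancel hje
      have := NI.zmod_cast_inj (lt_of_le_of_lt hk hDK)
        (lt_of_le_of_lt (Nat.lt_succ_iff.mp d.isLt) hDK) hcast
      omega
    have e2 : H p (fun ω => (S ω, U (k + 1) ω))
        = H p (fun ω => (W i' ω, (S ω, U k ω))) := by
      apply NI.H_mutual hp
        (f := fun z : α × (β × (ZMod K → α)) =>
          (z.2.1, fun j => if j = i' then z.1 else z.2.2 j))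
        (g := fun z : β × (ZMod K → α) =>
          (z.2 i', (z.1, fun j => if C k j then z.2 j else default)))
      · intro ω
        refine Prod.ext rfl ?_
        show U (k + 1) ω = fun j : ZMod K => if j = i' then W i' ω else U k ω j
        funext j
        beta_reduce
        by_cases hj : j = i'
        · rw [if_pos hj, hj]
          simp only [hU]
          rw [if_pos hCi']
        · rw [if_neg hj]
          simp only [hU]
          by_cases hc : C (k + 1) j
          · have hck : C k j := by
              intro d hd
              rcases Nat.eq_or_lt_of_le hd with he | hlt
              · intro hje
                apply hj
                rw [hje, hi', ← he]
              · exact hc d hlt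
            rw [if_pos hc, if_pos hck]
          · have hck : ¬ C k j := fun hck => hc (fun d hd => hck d (by omega))
            rw [if_neg hc, if_neg hck]
      · intro ω
        refine Prod.ext ?_ (Prod.ext rfl ?_)
        · show W i' ω = U (k + 1) ω i'
          simp only [hU]
          rw [if_pos hCi']
        · show U k ω = fun j : ZMod K => if C k j then U (k + 1) ω j else default
          funext j
          beta_reduce
          simp only [hU]
          by_cases hc : C k j
          · have hc1 : C (k + 1) j := fun d hd => hc d (by omega)
            rw [if_pos hc, if_pos hc, if_pos hc1]
          · rw [if_neg hc, if_neg hc]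
    have e1 : H p (fun ω => (W i' ω, (S ω, U k ω))) = H p (fun ω => (S ω, U k ω)) :=
      NI.H_pair_eq_of_det hp hdet
    rw [e2, e1]
  -- chain of decoding steps
  have hchain : ∀ m, m ≤ D + 1 →
      H p (fun ω => (S ω, U m ω)) = H p (fun ω => (S ω, U 0 ω)) := by
    intro m
    induction m with
    | zero => intro _; rfl
    | succ k ih => intro hm; rw [hstep k (by omega), ih (by omega)]
  have hfull : (fun ω => (S ω, U (D + 1) ω))
      = fun ω => (S ω, fun j : ZMod K => W j ω) := by
    funext ω
    refine Prod.ext rfl ?_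
    show U (D + 1) ω = fun j : ZMod K => W j ω
    funext j
    beta_reduce
    have hc : C (D + 1) j := fun d hd => absurd hd (Nat.not_le.mpr d.isLt)
    simp only [hU]
    rw [if_pos hc]
  have hU0 : U 0 = fun ω (j : ZMod K) =>
      if j ∈ Finset.univ.filter (fun j => C 0 j) then W j ω else default := by
    funext ω j
    simp only [hU]
    by_cases hc : C 0 j
    · rw [if_pos hc, if_pos (Finset.mem_filter.2 ⟨Finset.mem_univ _, hc⟩)]
    · rw [if_neg hc, if_neg (fun hm => hc (Finset.mem_filter.1 hm).2)]
  have h1 : H p (fun ω => fun j : ZMod K => W j ω) = ∑ j : ZMod K, H p (W j) :=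
    NI.H_indep hp1 W hindep
  have h2 : H p (fun ω => fun j : ZMod K => W j ω)
      ≤ H p (fun ω => (S ω, fun j : ZMod K => W j ω)) :=
    NI.H_snd_le hp S _
  have h3 : H p (fun ω => (S ω, fun j : ZMod K => W j ω))
      = H p (fun ω => (S ω, U 0 ω)) := by
    rw [← hfull]
    exact hchain (D + 1) le_rfl
  have h4 : H p (fun ω => (S ω, U 0 ω)) ≤ H p S + H p (U 0) :=
    NI.H_pair_le hp hp1 S (U 0)
  have h5 : H p (U 0) ≤ ∑ j ∈ Finset.univ.filter (fun j => C 0 j), H p (W j) := by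
    rw [hU0]
    exact NI.H_masked_le hp hp1 W _
  have hsplit : ∑ j : ZMod K, H p (W j)
      = ∑ j ∈ Finset.univ.filter (fun j => C 0 j), H p (W j)
        + ∑ j ∈ Finset.univ.filter (fun j => ¬ C 0 j), H p (W j) :=
    (Finset.sum_filter_add_sum_filter_not _ _ _).symm
  have hinj : ∀ d1 ∈ Finset.range (D + 1), ∀ d2 ∈ Finset.range (D + 1),
      i + (d1 : ZMod K) = i + (d2 : ZMod K) → d1 = d2 := by
    intro d1 hd1 d2 hd2 he
    exact NI.zmod_cast_inj
      (lt_of_lt_of_le (Finset.mem_range.mp hd1) (Nat.succ_le_of_lt hDK))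
      (lt_of_lt_of_le (Finset.mem_range.mp hd2) (Nat.succ_le_of_lt hDK))
      (add_left_cancel he)
  have hset : Finset.univ.filter (fun j => ¬ C 0 j)
      = (Finset.range (D + 1)).image (fun d : ℕ => i + (d : ZMod K)) := by
    ext j
    simp only [Finset.mem_filter, Finset.mem_univ, true_and, Finset.mem_image,
      Finset.mem_range, hC]
    constructor
    · intro hj
      push_neg at hj
      obtain ⟨d, _, hd⟩ := hj
      exact ⟨(d : ℕ), d.isLt, hd.symm⟩
    · rintro ⟨d, hd, rfl⟩
      intro hCj
      exact hCj ⟨d, hd⟩ (Nat.zero_le _) rfl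
  have hwin : ∑ j ∈ Finset.univ.filter (fun j => ¬ C 0 j), H p (W j)
      = ∑ d ∈ Finset.range (D + 1), H p (W (i + (d : ZMod K))) := by
    rw [hset, Finset.sum_image hinj]
  linarith [h1, h2, h3, h4, h5, hsplit, hwin]
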